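/- arXiv:1607.04001 — 2 statements merged into one kernel-verified Lean document; each statement's English description precedes it below -/
import Mathlib

section
/- Let m ≥ 5 and let τ be any square of the m×(m−2) projective checkerboard B(m, m−2). There is a hamiltonian path H from (m−2, 0) to τ in B(m, m−2) in which every non-terminal diagonal travels north if and only if τ = (⌊m/2⌋ − 1, ⌊(m−1)/2⌋ − 1). -/
namespace ProjBoard

/-- `(p,q)` is a square of the `m × n` board. -/
def Sq (m n : ℕ) (s : ℕ × ℕ) : Prop := s.1 < m ∧ s.2 < n

/-- The east move on the `m × n` projective checkerboard. -/
def moveE (m n : ℕ) (s : ℕ × ℕ) : ℕ × ℕ :=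
  if s.1 < m - 1 then (s.1 + 1, s.2) else (0, n - 1 - s.2)

/-- The north move on the `m × n` projective checkerboard. -/
def moveN (m n : ℕ) (s : ℕ × ℕ) : ℕ × ℕ :=
  if s.2 < n - 1 then (s.1, s.2 + 1) else (m - 1 - s.1, 0)

/-- Directed edge of the board: from a square `s` to `sE` or `sN`. -/
def Edge (m n : ℕ) (s t : ℕ × ℕ) : Prop :=
  Sq m n s ∧ (t = moveE m n s ∨ t = moveN m n s)

/-- A hamiltonian path, recorded as the list of squares it visits in order. -/
def IsHamPath (m n : ℕ) (l : List (ℕ × ℕ)) : Prop :=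
  l.Chain' (Edge m n) ∧ l.Nodup ∧ ∀ s, Sq m n s ↔ s ∈ l

/-- A hamiltonian path with initial square `ι` and terminal square `τ`. -/
def HamPathFromTo (m n : ℕ) (ι τ : ℕ × ℕ) (l : List (ℕ × ℕ)) : Prop :=
  IsHamPath m n l ∧ l.head? = some ι ∧ l.getLast? = some τ

/-- The square `s` travels east in the hamiltonian path `l`:
the edge from `s` to `sE` belongs to `l`. -/
def TravelsEast (m n : ℕ) (l : List (ℕ × ℕ)) (s : ℕ × ℕ) : Prop :=
  ∃ i : ℕ, l[i]? = some s ∧ l[i + 1]? = some (moveE m n s)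

/-- The square `s` travels north in the hamiltonian path `l`:
the edge from `s` to `sN` belongs to `l`. -/
def TravelsNorth (m n : ℕ) (l : List (ℕ × ℕ)) (s : ℕ × ℕ) : Prop :=
  ∃ i : ℕ, l[i]? = some s ∧ l[i + 1]? = some (moveN m n s)

/-- Two squares lie in the same (direction-forcing) diagonal. -/
def SameDiag (m n : ℕ) (s t : ℕ × ℕ) : Prop :=
  s.1 + s.2 = t.1 + t.2 ∨ s.1 + s.2 + (t.1 + t.2) = m + n - 3

/-- The southeasternmost square of the subdiagonal `S_b`. -/
def tauPlus (m n b : ℕ) : ℕ × ℕ :=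
  if b ≤ m - 1 then (b, 0) else (m - 1, b - (m - 1))



def F (m t : ℕ) (s : ℕ × ℕ) : ℕ × ℕ :=
  if s.1 + s.2 = m - 2 ∨ (s.1 + s.2 = m - 3 ∧ s.1 < t) then moveE m (m - 2) s
  else moveN m (m - 2) s

lemma iter2 {α : Type*} (f : α → α) {a b n : ℕ} {x0 x1 x2 : α}
    (h1 : f^[a] x0 = x1) (h2 : f^[b] x1 = x2) (h : n = b + a) : f^[n] x0 = x2 := by
  subst h; rw [Function.iterate_add_apply, h1, h2]

lemma iter1 {α : Type*} (f : α → α) {x0 x1 : α} (h1 : f x0 = x1) : f^[1] x0 = x1 := by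
  rwa [Function.iterate_one]

lemma pair_eq {a b c d : ℕ} (h1 : a = c) (h2 : b = d) : (a, b) = (c, d) := by
  rw [h1, h2]

variable {m t p q c d j : ℕ}

lemma F_E (hc : p + q = m - 2 ∨ (p + q = m - 3 ∧ p < t)) (hp : p < m - 1) :
    F m t (p, q) = (p + 1, q) := by
  simp only [F, moveE, if_pos hc]
  simp [hp]

lemma F_N (hc : ¬(p + q = m - 2 ∨ (p + q = m - 3 ∧ p < t))) (hq : q < m - 3) :
    F m t (p, q) = (p, q + 1) := by
  simp only [F, moveN, if_neg hc]
  rw [if_pos (by omega)]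

lemma F_top (hc : ¬(p + (m - 3) = m - 2 ∨ (p + (m - 3) = m - 3 ∧ p < t))) (hm : 5 ≤ m) :
    F m t (p, m - 3) = (m - 1 - p, 0) := by
  simp only [F, moveN, if_neg hc]
  rw [if_neg (by omega)]

lemma climbL (hp : p < t) (hd : p + d ≤ m - 3) :
    (F m t)^[d] (p, 0) = (p, d) := by
  induction d with
  | zero => rfl
  | succ d ih =>
    rw [Function.iterate_succ_apply', ih (by omega), F_N (by omega) (by omega)]

lemma climbH (ht : t ≤ p) (hd : p + d ≤ m - 2) (hd3 : d ≤ m - 3) :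
    (F m t)^[d] (p, 0) = (p, d) := by
  induction d with
  | zero => rfl
  | succ d ih =>
    rw [Function.iterate_succ_apply', ih (by omega) (by omega),
      F_N (by omega) (by omega)]

lemma climbT (hpq : m - 2 < p + q) (hd : q + d ≤ m - 3) :
    (F m t)^[d] (p, q) = (p, q + d) := by
  induction d with
  | zero => rfl
  | succ d ih =>
    rw [Function.iterate_succ_apply', ih (by omega), F_N (by omega) (by omega)]
    exact pair_eq rfl (by omega)

lemma passH (hm : 5 ≤ m) (ht : t < p) (hp : p ≤ m - 2) :
    (F m t)^[m - 1] (p, 0) = (m - 2 - p, 0) := by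
  have A : (F m t)^[m - 2 - p] (p, 0) = (p, m - 2 - p) :=
    climbH (by omega) (by omega) (by omega)
  have B : (F m t)^[1] (p, m - 2 - p) = (p + 1, m - 2 - p) :=
    iter1 _ (F_E (Or.inl (by omega)) (by omega))
  have C : (F m t)^[p - 1] (p + 1, m - 2 - p) = (p + 1, m - 3) := by
    rw [climbT (by omega) (by omega)]; exact pair_eq rfl (by omega)
  have D : (F m t)^[1] (p + 1, m - 3) = (m - 2 - p, 0) := by
    refine iter1 _ ?_
    rw [F_top (by omega) hm]; exact pair_eq (by omega) rfl
  have AB : (F m t)^[1 + (m - 2 - p)] (p, 0) = (p + 1, m - 2 - p) := iter2 _ A B rfl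
  have ABC : (F m t)^[(p - 1) + (1 + (m - 2 - p))] (p, 0) = (p + 1, m - 3) :=
    iter2 _ AB C rfl
  exact iter2 _ ABC D (by omega)

lemma passL (hm : 5 ≤ m) (hp : p < t) (ht : t ≤ m - 3) :
    (F m t)^[m] (p, 0) = (m - 3 - p, 0) := by
  have A : (F m t)^[m - 3 - p] (p, 0) = (p, m - 3 - p) := climbL hp (by omega)
  have B : (F m t)^[1] (p, m - 3 - p) = (p + 1, m - 3 - p) :=
    iter1 _ (F_E (Or.inr ⟨by omega, hp⟩) (by omega))
  have B2 : (F m t)^[1] (p + 1, m - 3 - p) = (p + 2, m - 3 - p) := by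
    refine iter1 _ ?_
    rw [F_E (Or.inl (by omega)) (by omega)]
  have C : (F m t)^[p] (p + 2, m - 3 - p) = (p + 2, m - 3) := by
    rw [climbT (by omega) (by omega)]; exact pair_eq rfl (by omega)
  have D : (F m t)^[1] (p + 2, m - 3) = (m - 3 - p, 0) := by
    refine iter1 _ ?_
    rw [F_top (by omega) hm]; exact pair_eq (by omega) rfl
  have AB : (F m t)^[1 + (m - 3 - p)] (p, 0) = (p + 1, m - 3 - p) := iter2 _ A B rfl
  have AB2 : (F m t)^[1 + (1 + (m - 3 - p))] (p, 0) = (p + 2, m - 3 - p) := iter2 _ AB B2 rfl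
  have ABC : (F m t)^[p + (1 + (1 + (m - 3 - p)))] (p, 0) = (p + 2, m - 3) :=
    iter2 _ AB2 C rfl
  exact iter2 _ ABC D (by omega)

lemma roundsG (hm : 5 ≤ m) (ht : t ≤ m - 3) (hj1 : j ≤ t) (hj2 : j + t ≤ m - 2) :
    (F m t)^[(2 * m - 1) * j] (m - 2, 0) = (m - 2 - j, 0) := by
  induction j with
  | zero => simp
  | succ j ih =>
    have A : (F m t)^[(2 * m - 1) * j] (m - 2, 0) = (m - 2 - j, 0) :=
      ih (by omega) (by omega)
    have B : (F m t)^[m - 1] (m - 2 - j, 0) = (j, 0) := by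
      rw [passH hm (by omega) (by omega)]; exact pair_eq (by omega) rfl
    have C : (F m t)^[m] (j, 0) = (m - 2 - (j + 1), 0) := by
      rw [passL hm (by omega) ht]; exact pair_eq (by omega) rfl
    refine iter2 _ A (iter2 _ B C rfl) ?_
    rw [Nat.mul_succ]
    omega

lemma botA (hm : 5 ≤ m) (ht : t ≤ m - 3) (hc1 : c ≤ t) (hc2 : c + t ≤ m - 3) :
    (F m t)^[(2 * m - 1) * c + (m - 1)] (m - 2, 0) = (c, 0) := by
  have A : (F m t)^[(2 * m - 1) * c] (m - 2, 0) = (m - 2 - c, 0) :=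
    roundsG hm ht hc1 (by omega)
  have B : (F m t)^[m - 1] (m - 2 - c, 0) = (c, 0) := by
    rw [passH hm (by omega) (by omega)]; exact pair_eq (by omega) rfl
  exact iter2 _ A B (by omega)

lemma botB (hm : 5 ≤ m) (ht : t ≤ m - 3) (hc1 : t ≤ c) (hc2 : c ≤ m - 2)
    (hc3 : m - 2 ≤ c + t) :
    (F m t)^[(2 * m - 1) * (m - 2 - c)] (m - 2, 0) = (c, 0) := by
  rw [roundsG hm ht (by omega) (by omega)]
  exact pair_eq (by omega) rfl

lemma posLowB (hm : 5 ≤ m) (hp : p < t) (ht : t ≤ m - 3) :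
    (F m t)^[m - 2 - p] (p, 0) = (p + 1, m - 3 - p) := by
  have A : (F m t)^[m - 3 - p] (p, 0) = (p, m - 3 - p) := climbL hp (by omega)
  have B : (F m t)^[1] (p, m - 3 - p) = (p + 1, m - 3 - p) :=
    iter1 _ (F_E (Or.inr ⟨by omega, hp⟩) (by omega))
  exact iter2 _ A B (by omega)

lemma posLowC (hm : 5 ≤ m) (hp : p < t) (ht : t ≤ m - 3) (hq1 : m - 3 - p ≤ q)
    (hq2 : q ≤ m - 3) :
    (F m t)^[q + 2] (p, 0) = (p + 2, q) := by
  have A : (F m t)^[m - 2 - p] (p, 0) = (p + 1, m - 3 - p) := posLowB hm hp ht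
  have B : (F m t)^[1] (p + 1, m - 3 - p) = (p + 2, m - 3 - p) := by
    refine iter1 _ ?_
    rw [F_E (Or.inl (by omega)) (by omega)]
  have C : (F m t)^[q - (m - 3 - p)] (p + 2, m - 3 - p) = (p + 2, q) := by
    rw [climbT (by omega) (by omega)]; exact pair_eq rfl (by omega)
  have AB : (F m t)^[1 + (m - 2 - p)] (p, 0) = (p + 2, m - 3 - p) := iter2 _ A B rfl
  exact iter2 _ AB C (by omega)

lemma posHighB (hm : 5 ≤ m) (ht : t ≤ p) (hp0 : 1 ≤ p) (hp : p ≤ m - 2)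
    (hq1 : m - 2 - p ≤ q) (hq2 : q ≤ m - 3) :
    (F m t)^[q + 1] (p, 0) = (p + 1, q) := by
  have A : (F m t)^[m - 2 - p] (p, 0) = (p, m - 2 - p) :=
    climbH ht (by omega) (by omega)
  have B : (F m t)^[1] (p, m - 2 - p) = (p + 1, m - 2 - p) :=
    iter1 _ (F_E (Or.inl (by omega)) (by omega))
  have C : (F m t)^[q - (m - 2 - p)] (p + 1, m - 2 - p) = (p + 1, q) := by
    rw [climbT (by omega) (by omega)]; exact pair_eq rfl (by omega)
  have AB : (F m t)^[1 + (m - 2 - p)] (p, 0) = (p + 1, m - 2 - p) := iter2 _ A B rfl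
  exact iter2 _ AB C (by omega)



/-- board invariance -/
lemma F_Sq (hm : 5 ≤ m) {s : ℕ × ℕ} (hs : Sq m (m - 2) s) : Sq m (m - 2) (F m t s) := by
  obtain ⟨h1, h2⟩ := hs
  unfold F moveE moveN
  split <;> split <;> constructor <;> simp <;> omega

lemma orbit_Sq (hm : 5 ≤ m) (i : ℕ) : Sq m (m - 2) ((F m t)^[i] (m - 2, 0)) := by
  induction i with
  | zero => simp only [Function.iterate_zero, id_eq]; exact ⟨by omega, by omega⟩
  | succ i ih => rw [Function.iterate_succ_apply']; exact F_Sq hm ih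

lemma F_edge (hm : 5 ≤ m) {s : ℕ × ℕ} (hs : Sq m (m - 2) s) : Edge m (m - 2) s (F m t s) := by
  refine ⟨hs, ?_⟩
  unfold F; split
  · exact Or.inl rfl
  · exact Or.inr rfl



section Surj
variable {m t p q c r u : ℕ}

lemma bndA (hm : 5 ≤ m) (hpar : 2*t + 2 = m ∨ 2*t + 3 = m)
    (hc : c + 1 ≤ t) (hr : r ≤ m - 1) :
    r + ((2*m-1)*c + (m-1)) < m * (m-2) := by
  have h1 : (1:ℕ) ≤ 2*m := by omega
  have h2 : (1:ℕ) ≤ m := by omega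
  have h3 : (2:ℕ) ≤ m := by omega
  zify [h1, h2, h3] at *
  rcases hpar with hp | hp <;>
    nlinarith [mul_nonneg (by linarith : (0:ℤ) ≤ 2*m - 1) (by linarith : (0:ℤ) ≤ (t:ℤ) - 1 - c)]

lemma bndA2odd (hm : 5 ≤ m) (hpar : 2*t + 3 = m) (hq : q + t + 3 ≤ m) :
    q + ((2*m-1)*t + (m-1)) < m * (m-2) := by
  have h1 : (1:ℕ) ≤ 2*m := by omega
  have h2 : (1:ℕ) ≤ m := by omega
  have h3 : (2:ℕ) ≤ m := by omega
  zify [h1, h2, h3] at *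
  nlinarith

lemma bndB (hm : 5 ≤ m) (hpar : 2*t + 2 = m ∨ 2*t + 3 = m)
    (hu : u + t + 3 ≤ m) (hr : r ≤ m - 2) :
    r + (2*m-1)*u < m * (m-2) := by
  have h1 : (1:ℕ) ≤ 2*m := by omega
  have h2 : (1:ℕ) ≤ m := by omega
  have h3 : (2:ℕ) ≤ m := by omega
  zify [h1, h2, h3] at *
  rcases hpar with hp | hp <;>
    nlinarith [mul_nonneg (by linarith : (0:ℤ) ≤ 2*m - 1) (by linarith : (0:ℤ) ≤ (m:ℤ) - 3 - t - u)]

lemma bndA2even (hm : 5 ≤ m) (hpar : 2*t + 2 = m) (hq : q + t + 3 ≤ m) :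
    q + (2*m-1)*(m-2-t) < m * (m-2) := by
  have h0 : m - 2 - t = t := by omega
  rw [h0]
  have h1 : (1:ℕ) ≤ 2*m := by omega
  have h2 : (2:ℕ) ≤ m := by omega
  zify [h1, h2] at *
  nlinarith


lemma surj {m t p q : ℕ} (hm : 5 ≤ m) (hpar : 2*t + 2 = m ∨ 2*t + 3 = m)
    (hp : p < m) (hq : q < m - 2) :
    ∃ i < m * (m - 2), (F m t)^[i] (m - 2, 0) = (p, q) := by
  have ht3 : t ≤ m - 3 := by omega
  have ht1 : 1 ≤ t := by omega
  rcases Nat.lt_or_ge p (t+1) with hpt | hpt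
  · -- p ≤ t
    rcases Nat.lt_or_ge (q + p) (m-2) with hd1 | hd1
    · -- q + p ≤ m - 3 : bottom segment
      rcases Nat.lt_or_ge p t with hp2 | hp2
      · -- case a1
        refine ⟨q + ((2*m-1)*p + (m-1)), bndA hm hpar (by omega) (by omega),
          iter2 _ (botA hm ht3 (by omega) (by omega)) (climbL (by omega) (by omega)) rfl⟩
      · -- case a2 : p = t
        have hpt' : p = t := by omega
        subst hpt'
        rcases hpar with hpe | hpe
        · exact ⟨q + (2*m-1)*(m-2-p), bndA2even hm hpe (by omega),
            iter2 _ (botB hm ht3 (le_refl _) (by omega) (by omega))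
              (climbH (le_refl _) (by omega) (by omega)) rfl⟩
        · exact ⟨q + ((2*m-1)*p + (m-1)), bndA2odd hm hpe (by omega),
            iter2 _ (botA hm ht3 (le_refl _) (by omega))
              (climbH (le_refl _) (by omega) (by omega)) rfl⟩
    · rcases Nat.eq_or_lt_of_le hd1 with hd2 | hd2
      · -- case b : q = m - 2 - p, 1 ≤ p ≤ t
        have hp1 : 1 ≤ p := by omega
        have hv : (F m t)^[m - 2 - (p-1)] (p - 1, 0) = (p, q) := by
          rw [posLowB hm (by omega) ht3]; exact pair_eq (by omega) (by omega)
        exact ⟨(m - 2 - (p-1)) + ((2*m-1)*(p-1) + (m-1)),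
          bndA hm hpar (by omega) (by omega),
          iter2 _ (botA hm ht3 (by omega) (by omega)) hv rfl⟩
      · -- case c : q + p ≥ m - 1, p ≤ t + 1, p ≥ 2
        have hp2 : 2 ≤ p := by omega
        have hv : (F m t)^[q + 2] (p - 2, 0) = (p, q) := by
          rw [posLowC hm (by omega) ht3 (by omega) (by omega)]
          exact pair_eq (by omega) rfl
        exact ⟨(q + 2) + ((2*m-1)*(p-2) + (m-1)),
          bndA hm hpar (by omega) (by omega),
          iter2 _ (botA hm ht3 (by omega) (by omega)) hv rfl⟩
  · -- p ≥ t + 1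
    rcases Nat.lt_or_ge (q + p) (m-1) with hd1 | hd1
    · -- case d : q + p ≤ m - 2 (so p ≤ m - 2)
      refine ⟨q + (2*m-1)*(m-2-p), bndB hm hpar (by omega) (by omega),
        iter2 _ (botB hm ht3 (by omega) (by omega) (by omega))
          (climbH (by omega) (by omega) (by omega)) rfl⟩
    · rcases Nat.lt_or_ge p (t+2) with hp2 | hp2
      · -- case c again : p = t + 1, q + p ≥ m - 1
        have hp2' : 2 ≤ p := by omega
        have hv : (F m t)^[q + 2] (p - 2, 0) = (p, q) := by
          rw [posLowC hm (by omega) ht3 (by omega) (by omega)]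
          exact pair_eq (by omega) rfl
        exact ⟨(q + 2) + ((2*m-1)*(p-2) + (m-1)),
          bndA hm hpar (by omega) (by omega),
          iter2 _ (botA hm ht3 (by omega) (by omega)) hv rfl⟩
      · -- case e : p ≥ t + 2, q + p ≥ m - 1
        have hv : (F m t)^[q + 1] (p - 1, 0) = (p, q) := by
          rw [posHighB hm (by omega) (by omega) (by omega) (by omega) (by omega)]
          exact pair_eq (by omega) rfl
        refine ⟨(q + 1) + (2*m-1)*(m-2-(p-1)), ?_,
          iter2 _ (botB hm ht3 (by omega) (by omega) (by omega)) hv rfl⟩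
        have he : m - 2 - (p-1) = m - 1 - p := by omega
        rw [he]
        exact bndB hm hpar (by omega) (by omega)

end Surj

lemma chain'_iff_get' {α : Type*} {R : α → α → Prop} {l : List α} :
    l.Chain' R ↔ ∀ (i : ℕ) (h : i < l.length - 1),
      R (l.get ⟨i, by omega⟩) (l.get ⟨i + 1, by omega⟩) := by
  constructor
  · intro h i hi; exact List.isChain_iff_getElem.mp h i (by omega)
  · intro h; exact List.isChain_iff_getElem.mpr fun i hi => h i (by omega)

def LL (m t : ℕ) : List (ℕ × ℕ) := (List.range (m * (m - 2))).map fun i => (F m t)^[i] (m - 2, 0)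

section Assemble
variable {m t : ℕ}

lemma F_notdiag {s : ℕ × ℕ} (h2 : s.1 + s.2 ≠ m - 2) (h3 : s.1 + s.2 ≠ m - 3) :
    F m t s = moveN m (m - 2) s := by
  unfold F; rw [if_neg]; push_neg; exact ⟨h2, fun h => absurd h h3⟩

lemma LL_length : (LL m t).length = m * (m - 2) := by simp [LL]

lemma LL_getElem? {i : ℕ} (hi : i < m * (m - 2)) :
    (LL m t)[i]? = some ((F m t)^[i] (m - 2, 0)) := by
  simp [LL, List.getElem?_map, List.getElem?_range, hi]

lemma lastIdx (hm : 5 ≤ m) (hpar : 2*t + 2 = m ∨ 2*t + 3 = m) :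
    (F m t)^[m * (m - 2) - 1] (m - 2, 0) = (t, m - 3 - t) := by
  have ht3 : t ≤ m - 3 := by omega
  rcases hpar with hpe | hpe
  · have A := botB (t := t) (c := t) hm ht3 (le_refl _) (by omega) (by omega)
    have B : (F m t)^[m - 3 - t] (t, 0) = (t, m - 3 - t) :=
      climbH (le_refl _) (by omega) (by omega)
    refine iter2 _ A B ?_
    have e1 : m - 2 - t = t := by omega
    have e2 : m - 3 - t = t - 1 := by omega
    rw [e1, e2]
    have h2 : (2:ℕ) ≤ m := by omega
    have h1 : (1:ℕ) ≤ 2*m := by omega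
    have ht1 : (1:ℕ) ≤ t := by omega
    have hN : 1 ≤ m * (m-2) := Nat.mul_pos (by omega) (by omega)
    zify [h1, h2, ht1, hN] at *
    linear_combination (-(m:ℤ)) * hpe
  · have A := botA (t := t) (c := t) hm ht3 (le_refl _) (by omega)
    have B : (F m t)^[m - 3 - t] (t, 0) = (t, m - 3 - t) :=
      climbH (le_refl _) (by omega) (by omega)
    refine iter2 _ A B ?_
    have e2 : m - 3 - t = t := by omega
    rw [e2]
    have h2 : (2:ℕ) ≤ m := by omega
    have h1 : (1:ℕ) ≤ 2*m := by omega
    have h3 : (1:ℕ) ≤ m := by omega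
    have hN : 1 ≤ m * (m-2) := Nat.mul_pos (by omega) (by omega)
    zify [h1, h2, h3, hN] at *
    linear_combination (-(m:ℤ)) * hpe

lemma sufficiency (hm : 5 ≤ m) (hpar : 2*t + 2 = m ∨ 2*t + 3 = m) :
    HamPathFromTo m (m - 2) (m - 2, 0) (t, m - 3 - t) (LL m t) ∧
      ∀ s, Sq m (m - 2) s → ¬ SameDiag m (m - 2) s (t, m - 3 - t) →
        TravelsNorth m (m - 2) (LL m t) s := by
  have ht3 : t ≤ m - 3 := by omega
  have hN : 1 ≤ m * (m - 2) := Nat.mul_pos (by omega) (by omega)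
  have hmem : ∀ s : ℕ × ℕ, Sq m (m - 2) s → s ∈ LL m t := by
    rintro ⟨a, b⟩ ⟨h1, h2⟩
    obtain ⟨i, hi, hv⟩ := surj hm hpar h1 h2
    simp only [LL, List.mem_map, List.mem_range]
    exact ⟨i, hi, hv⟩
  have hmem' : ∀ s : ℕ × ℕ, s ∈ LL m t → Sq m (m - 2) s := by
    intro s hs
    simp only [LL, List.mem_map, List.mem_range] at hs
    obtain ⟨i, _, hv⟩ := hs
    rw [← hv]; exact orbit_Sq hm i
  have hfin : (LL m t).toFinset = Finset.range m ×ˢ Finset.range (m - 2) := by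
    ext s
    simp only [List.mem_toFinset, Finset.mem_product, Finset.mem_range]
    constructor
    · intro h; exact (hmem' s h)
    · intro h; exact hmem s h
  have hcard : (LL m t).toFinset.card = m * (m - 2) := by
    rw [hfin, Finset.card_product]; simp
  have hnodup : (LL m t).Nodup := by
    rw [← List.dedup_eq_self]
    refine (List.dedup_sublist _).eq_of_length ?_
    rw [← List.card_toFinset, hcard, LL_length]
  have hchain : (LL m t).Chain' (Edge m (m - 2)) := by
    rw [chain'_iff_get']
    intro i hi
    rw [LL_length] at hi
    have g1 : (LL m t).get ⟨i, by rw [LL_length]; omega⟩ = (F m t)^[i] (m - 2, 0) := by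
      simp [LL]
    have g2 : (LL m t).get ⟨i+1, by rw [LL_length]; omega⟩ = (F m t)^[i+1] (m - 2, 0) := by
      simp [LL]
    rw [g1, g2, Function.iterate_succ_apply']
    exact F_edge hm (orbit_Sq hm i)
  refine ⟨⟨⟨hchain, hnodup, fun s => ⟨hmem s, hmem' s⟩⟩, ?_, ?_⟩, ?_⟩
  · rw [List.head?_eq_getElem?, LL_getElem? (by omega)]
    rw [Function.iterate_zero, id_eq]
  · rw [List.getLast?_eq_getElem?, LL_length, LL_getElem? (by omega)]
    rw [lastIdx hm hpar]
  · rintro ⟨a, b⟩ hs hnd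
    have hsum : a + b ≠ m - 3 ∧ a + b ≠ m - 2 := by
      simp only [SameDiag, not_or] at hnd
      omega
    obtain ⟨i, hi, hv⟩ := surj hm hpar hs.1 hs.2
    have hine : i ≠ m * (m - 2) - 1 := by
      intro h
      rw [h, lastIdx hm hpar] at hv
      have : a + b = m - 3 := by
        have h1 : a = t := by rw [Prod.ext_iff] at hv; exact hv.1.symm
        have h2 : b = m - 3 - t := by rw [Prod.ext_iff] at hv; exact hv.2.symm
        omega
      exact hsum.1 this
    refine ⟨i, ?_, ?_⟩
    · rw [LL_getElem? hi, hv]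
    · rw [LL_getElem? (by omega), Function.iterate_succ_apply', hv,
        F_notdiag hsum.2 hsum.1]
end Assemble

/-! ### Necessity -/

def Succ (l : List (ℕ × ℕ)) (s x : ℕ × ℕ) : Prop :=
  ∃ i, l[i]? = some s ∧ l[i + 1]? = some x

section NecInfra
variable {m : ℕ} {τ : ℕ × ℕ} {l : List (ℕ × ℕ)}

lemma idx_inj (hnd : l.Nodup) {i j : ℕ} {a : ℕ × ℕ}
    (hi : l[i]? = some a) (hj : l[j]? = some a) : i = j := by
  have h1 : i < l.length := (List.getElem?_eq_some_iff.mp hi).1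
  exact (List.getElem?_inj h1 hnd).mp (hi.trans hj.symm)

lemma succ_det (hnd : l.Nodup) {s x : ℕ × ℕ} (h : Succ l s x) {i : ℕ}
    (hi : l[i]? = some s) : l[i + 1]? = some x := by
  obtain ⟨j, hj1, hj2⟩ := h
  rwa [idx_inj hnd hi hj1]

lemma hlen (hm : 5 ≤ m) (hham : IsHamPath m (m - 2) l) : l.length = m * (m - 2) := by
  obtain ⟨_, hnd, hcov⟩ := hham
  have hfin : l.toFinset = Finset.range m ×ˢ Finset.range (m - 2) := by
    ext s
    simp only [List.mem_toFinset, Finset.mem_product, Finset.mem_range]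
    constructor
    · intro h
      have := (hcov s).mpr h
      exact this
    · intro h; exact (hcov s).mp h
  have hcard : l.toFinset.card = m * (m - 2) := by
    rw [hfin, Finset.card_product]; simp
  have hdl : l.dedup = l := List.dedup_eq_self.mpr hnd
  rw [← hdl, ← List.card_toFinset, hcard]

lemma head0 (hhead : l.head? = some (m - 2, 0)) : l[0]? = some (m - 2, 0) := by
  rwa [List.head?_eq_getElem?] at hhead

lemma no_pred_head (hnd : l.Nodup) (hhead : l.head? = some (m - 2, 0)) {i : ℕ}
    (h : l[i + 1]? = some (m - 2, 0)) : False := by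
  have := idx_inj hnd h (head0 hhead)
  omega

lemma lastN (hm : 5 ≤ m) (hham : IsHamPath m (m - 2) l) (hlast : l.getLast? = some τ) :
    l[m * (m - 2) - 1]? = some τ := by
  rw [List.getLast?_eq_getElem?, hlen hm hham] at hlast
  exact hlast

lemma tau_idx (hm : 5 ≤ m) (hham : IsHamPath m (m - 2) l) (hlast : l.getLast? = some τ)
    {i : ℕ} (hi : l[i]? = some τ) : i = m * (m - 2) - 1 :=
  idx_inj hham.2.1 hi (lastN hm hham hlast)

lemma mem_ex (hham : IsHamPath m (m - 2) l) {s : ℕ × ℕ} (hs : Sq m (m - 2) s) :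
    ∃ i : ℕ, l[i]? = some s :=
  List.mem_iff_getElem?.mp ((hham.2.2 s).mp hs)

lemma succ_ex (hm : 5 ≤ m) (hham : IsHamPath m (m - 2) l) (hlast : l.getLast? = some τ)
    {s : ℕ × ℕ} {i : ℕ} (hi : l[i]? = some s) (hsτ : s ≠ τ) :
    ∃ x, l[i + 1]? = some x ∧ (x = moveE m (m - 2) s ∨ x = moveN m (m - 2) s) := by
  have hil : i < l.length := (List.getElem?_eq_some_iff.mp hi).1
  have hine : i ≠ m * (m - 2) - 1 := fun h => hsτ (by
    have := lastN hm hham hlast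
    rw [← h] at this
    exact Option.some_injective _ (hi.symm.trans this))
  have hi1 : i + 1 < l.length := by
    rw [hlen hm hham] at hil ⊢; omega
  have hget := chain'_iff_get'.mp hham.1 i (by omega)
  have g1 : l.get ⟨i, hil⟩ = s := by
    have := List.getElem?_eq_some_iff.mp hi
    simpa [List.get_eq_getElem] using this.2
  refine ⟨l.get ⟨i + 1, hi1⟩, ?_, ?_⟩
  · simp [List.getElem?_eq_getElem hi1, List.get_eq_getElem]
  · obtain ⟨_, hor⟩ := hget
    rw [g1] at hor
    simpa using hor

lemma pred_ex (hm : 5 ≤ m) (hham : IsHamPath m (m - 2) l)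
    (hhead : l.head? = some (m - 2, 0))
    {s : ℕ × ℕ} (hs : Sq m (m - 2) s) (hs0 : s ≠ (m - 2, 0)) :
    ∃ j y, l[j]? = some y ∧ l[j + 1]? = some s ∧ Edge m (m - 2) y s := by
  obtain ⟨i, hi⟩ := mem_ex hham hs
  have hil : i < l.length := (List.getElem?_eq_some_iff.mp hi).1
  have hi0 : i ≠ 0 := by
    intro h
    rw [h] at hi
    exact hs0 (Option.some_injective _ (hi.symm.trans (head0 hhead)).symm).symm
  obtain ⟨j, rfl⟩ : ∃ j, i = j + 1 := ⟨i - 1, by omega⟩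
  have hjl : j < l.length := by omega
  have hget := chain'_iff_get'.mp hham.1 j (by omega)
  refine ⟨j, l.get ⟨j, hjl⟩, ?_, hi, ?_⟩
  · simp [List.getElem?_eq_getElem hjl, List.get_eq_getElem]
  · have g1 : l.get ⟨j + 1, hil⟩ = s := by
      have := List.getElem?_eq_some_iff.mp hi
      simpa [List.get_eq_getElem] using this.2
    rw [g1] at hget
    exact hget

lemma moveE_eq {m p q : ℕ} (hp : p < m - 1) : moveE m (m - 2) (p, q) = (p + 1, q) := by
  simp [moveE, hp]

lemma moveN_eq {m p q : ℕ} (hq : q < m - 3) : moveN m (m - 2) (p, q) = (p, q + 1) := by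
  unfold moveN; rw [if_pos (by simp; omega)]

lemma moveN_top {m p : ℕ} (hm : 5 ≤ m) : moveN m (m - 2) (p, m - 3) = (m - 1 - p, 0) := by
  unfold moveN; rw [if_neg (by simp; omega)]

/-- predecessors of an interior square -/
lemma pre_of_edge (hm : 5 ≤ m) {y : ℕ × ℕ} {a b : ℕ}
    (h : Edge m (m - 2) y (a, b)) (ha1 : 1 ≤ a) (hb1 : 1 ≤ b) (hb2 : b ≤ m - 3) :
    y = (a - 1, b) ∨ y = (a, b - 1) := by
  obtain ⟨hy, hor⟩ := h
  obtain ⟨y1, y2⟩ := y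
  simp only [moveE, moveN] at hor
  rcases hor with h | h
  · split at h
    · left; simp only [Prod.mk.injEq] at h ⊢; omega
    · simp only [Prod.mk.injEq] at h; omega
  · split at h
    · right; simp only [Prod.mk.injEq] at h ⊢; omega
    · simp only [Prod.mk.injEq] at h; omega

end NecInfra

section NecCascade
variable {m : ℕ} {τ : ℕ × ℕ} {l : List (ℕ × ℕ)}

lemma tau_sum (hm : 5 ≤ m) (hham : IsHamPath m (m - 2) l)
    (hhead : l.head? = some (m - 2, 0))
    (hTN : ∀ s, Sq m (m - 2) s → ¬SameDiag m (m - 2) s τ → TravelsNorth m (m - 2) l s) :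
    τ.1 + τ.2 = m - 3 ∨ τ.1 + τ.2 = m - 2 := by
  by_cases hsd : SameDiag m (m - 2) (1, m - 3) τ
  · simp only [SameDiag] at hsd; omega
  · exfalso
    obtain ⟨i, h1, h2⟩ := hTN (1, m - 3) ⟨by omega, by omega⟩ hsd
    rw [moveN_top hm] at h2
    rw [show m - 1 - 1 = m - 2 from by omega] at h2
    exact no_pred_head hham.2.1 hhead h2

lemma no_r_east (hm : 5 ≤ m) (hham : IsHamPath m (m - 2) l)
    (hhead : l.head? = some (m - 2, 0)) (hlast : l.getLast? = some τ) :
    ∀ k q : ℕ, q + k = m - 3 →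
    (∀ q', q < q' → q' ≤ m - 3 → (q', m - 3 - q') ≠ τ) →
    ¬ Succ l (q, m - 3 - q) (moveE m (m - 2) (q, m - 3 - q)) := by
  intro k
  induction k with
  | zero =>
    intro q hq _ hS
    obtain ⟨i, h1, h2⟩ := hS
    rw [moveE_eq (by omega)] at h2
    rw [show ((q + 1 : ℕ), (m - 3 - q : ℕ)) = ((m - 2 : ℕ), (0 : ℕ)) from
      pair_eq (by omega) (by omega)] at h2
    exact no_pred_head hham.2.1 hhead h2
  | succ k ih =>
    intro q hq hτs hS
    obtain ⟨i, h1, h2⟩ := hS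
    rw [moveE_eq (by omega)] at h2
    have hr'τ : ((q + 1 : ℕ), (m - 3 - (q + 1) : ℕ)) ≠ τ := hτs (q + 1) (by omega) (by omega)
    obtain ⟨j, hj⟩ := mem_ex hham (⟨by omega, by omega⟩ : Sq m (m - 2) (q + 1, m - 3 - (q + 1)))
    obtain ⟨x, hx1, hx2⟩ := succ_ex hm hham hlast hj hr'τ
    rcases hx2 with hE | hN
    · exact ih (q + 1) (by omega) (fun q' hq1 hq2 => hτs q' (by omega) hq2)
        ⟨j, hj, by rw [hx1, hE]⟩
    · rw [moveN_eq (by omega)] at hN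
      have hxx : x = (q + 1, m - 3 - q) := by rw [hN]; exact pair_eq rfl (by omega)
      rw [hxx] at hx1
      have hij : i = j := by have := idx_inj hham.2.1 h2 hx1; omega
      rw [hij] at h1
      have := Option.some_injective _ (h1.symm.trans hj)
      simp only [Prod.mk.injEq] at this
      omega

lemma chainF (hnd : l.Nodup) (g : ℕ → ℕ × ℕ) {i0 D : ℕ}
    (hg : ∀ e, e < D → Succ l (g e) (g (e + 1))) (h0 : l[i0]? = some (g 0)) :
    ∀ d, d ≤ D → l[i0 + d]? = some (g d) := by
  intro d
  induction d with
  | zero => intro _; simpa using h0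
  | succ d ih =>
    intro hd
    have := succ_det hnd (hg d (by omega)) (ih (by omega))
    rwa [show i0 + d + 1 = i0 + (d + 1) from by omega] at this

lemma tau_sum3 (hm : 5 ≤ m) (hham : IsHamPath m (m - 2) l)
    (hhead : l.head? = some (m - 2, 0)) (hlast : l.getLast? = some τ)
    (hTN : ∀ s, Sq m (m - 2) s → ¬SameDiag m (m - 2) s τ → TravelsNorth m (m - 2) l s) :
    τ.1 + τ.2 = m - 3 := by
  rcases tau_sum hm hham hhead hTN with h | h
  · exact h
  exfalso
  -- all squares in the pair-0 cycle travel north; chase around the cycle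
  set g : ℕ → ℕ × ℕ := fun d => if d ≤ m - 3 then (0, d) else (m - 1, d - (m - 2)) with hg
  have hno : ¬ Succ l (0, m - 3) (moveE m (m - 2) (0, m - 3)) := by
    have := no_r_east hm hham hhead hlast (m - 3) 0 (by omega)
      (fun q' hq1 hq2 heq => by
        rw [← heq] at h; simp only at h; omega)
    rwa [show (m : ℕ) - 3 - 0 = m - 3 from by omega] at this
  have hstep : ∀ e, e < 2 * m - 5 → Succ l (g e) (g (e + 1)) := by
    intro e he
    rcases Nat.lt_or_ge e (m - 3) with h1 | h1
    · -- (0, e) → (0, e+1)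
      have hT := hTN (0, e) ⟨by omega, by omega⟩ (by simp only [SameDiag]; omega)
      obtain ⟨i, hi1, hi2⟩ := hT
      rw [moveN_eq (by omega)] at hi2
      refine ⟨i, ?_, ?_⟩ <;> simp only [hg]
      · rw [if_pos (by omega)]; exact hi1
      · rw [if_pos (by omega)]; exact hi2
    · rcases Nat.eq_or_lt_of_le h1 with h2 | h2
      · -- (0, m-3) → (m-1, 0)
        obtain ⟨j, hj⟩ := mem_ex hham (⟨by omega, by omega⟩ : Sq m (m - 2) (0, m - 3))
        have hne : ((0 : ℕ), (m - 3 : ℕ)) ≠ τ := by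
          intro heq; rw [← heq] at h; simp only at h; omega
        obtain ⟨x, hx1, hx2⟩ := succ_ex hm hham hlast hj hne
        rcases hx2 with hE | hN
        · exact absurd ⟨j, hj, by rw [hx1, hE]⟩ hno
        · rw [moveN_top hm] at hN
          refine ⟨j, ?_, ?_⟩ <;> simp only [hg]
          · rw [if_pos (by omega), ← h2]; exact hj
          · rw [if_neg (by omega)]
            rw [hx1, hN]
            exact congrArg some (pair_eq (by omega) (by omega))
      · -- (m-1, e-(m-2)) → (m-1, e-(m-2)+1)
        have hT := hTN (m - 1, e - (m - 2)) ⟨by omega, by omega⟩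
          (by simp only [SameDiag]; omega)
        obtain ⟨i, hi1, hi2⟩ := hT
        rw [moveN_eq (by omega)] at hi2
        refine ⟨i, ?_, ?_⟩ <;> simp only [hg]
        · rw [if_neg (by omega)]; exact hi1
        · rw [if_neg (by omega)]
          rw [hi2]
          exact congrArg some (pair_eq rfl (by omega))
  obtain ⟨i0, hi0⟩ := mem_ex hham (⟨by omega, by omega⟩ : Sq m (m - 2) (0, 0))
  have h00 : l[i0]? = some (g 0) := by
    simp only [hg]; rw [if_pos (by omega)]; exact hi0
  have hlastcyc := chainF hham.2.1 g hstep h00 (2 * m - 5) (le_refl _)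
  -- l[i0 + (2m-5)] = (m-1, m-3)
  have hval : g (2 * m - 5) = (m - 1, m - 3) := by
    simp only [hg]; rw [if_neg (by omega)]; exact pair_eq rfl (by omega)
  rw [hval] at hlastcyc
  -- one more step: (m-1, m-3) → (0,0)
  have hT := hTN (m - 1, m - 3) ⟨by omega, by omega⟩ (by simp only [SameDiag]; omega)
  obtain ⟨i, hi1, hi2⟩ := hT
  rw [moveN_top hm] at hi2
  have hij := idx_inj hham.2.1 hlastcyc hi1
  rw [← hij] at hi2
  rw [show ((m : ℕ) - 1 - (m - 1), (0 : ℕ)) = ((0 : ℕ), (0 : ℕ)) from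
    pair_eq (by omega) rfl] at hi2
  have := idx_inj hham.2.1 hi2 hi0
  omega

end NecCascade

section NecForce
variable {m : ℕ} {τ : ℕ × ℕ} {l : List (ℕ × ℕ)}

lemma no_s_north (hm : 5 ≤ m) (hham : IsHamPath m (m - 2) l)
    (hhead : l.head? = some (m - 2, 0)) (hlast : l.getLast? = some τ)
    (hτ3 : τ.1 + τ.2 = m - 3) :
    ∀ p, 1 ≤ p → p ≤ m - 2 → ¬ Succ l (p, m - 2 - p) (moveN m (m - 2) (p, m - 2 - p)) := by
  intro p
  induction p with
  | zero => omega
  | succ p ih =>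
    intro hp1 hp2 hS
    rcases Nat.eq_or_lt_of_le hp1 with h1 | h1
    · -- p + 1 = 1
      obtain ⟨i, hi1, hi2⟩ := hS
      have hpz : p = 0 := by omega
      subst hpz
      rw [show ((1 : ℕ), (m - 2 - 1 : ℕ)) = ((1 : ℕ), (m - 3 : ℕ)) from
        pair_eq rfl (by omega)] at hi2
      rw [moveN_top hm, show (m : ℕ) - 1 - 1 = m - 2 from by omega] at hi2
      exact no_pred_head hham.2.1 hhead hi2
    · -- p ≥ 1
      obtain ⟨i, hi1, hi2⟩ := hS
      rw [moveN_eq (by omega)] at hi2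
      -- hi2 : l[i+1]? = some (p+1, m-2-(p+1)+1) = (p+1, m-2-p)
      rw [show ((p + 1 : ℕ), (m - 2 - (p + 1) + 1 : ℕ)) = ((p + 1 : ℕ), (m - 2 - p : ℕ)) from
        pair_eq rfl (by omega)] at hi2
      -- s_p must then go east to the same square , contradiction, so s_p north, contra ih
      have hsτ : ((p : ℕ), (m - 2 - p : ℕ)) ≠ τ := by
        intro heq; rw [← heq] at hτ3; simp only at hτ3; omega
      obtain ⟨j, hj⟩ := mem_ex hham (⟨by omega, by omega⟩ : Sq m (m - 2) (p, m - 2 - p))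
      obtain ⟨x, hx1, hx2⟩ := succ_ex hm hham hlast hj hsτ
      rcases hx2 with hE | hN
      · rw [moveE_eq (by omega)] at hE
        rw [hE] at hx1
        have hij : i = j := by have := idx_inj hham.2.1 hi2 hx1; omega
        rw [hij] at hi1
        have := Option.some_injective _ (hi1.symm.trans hj)
        simp only [Prod.mk.injEq] at this
        omega
      · exact ih (by omega) (by omega) ⟨j, hj, by rw [hx1, hN]⟩

end NecForce

section NecForce2
variable {m t : ℕ} {τ : ℕ × ℕ} {l : List (ℕ × ℕ)}

lemma s_east (hm : 5 ≤ m) (hham : IsHamPath m (m - 2) l)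
    (hhead : l.head? = some (m - 2, 0)) (hlast : l.getLast? = some τ)
    (hτ3 : τ.1 + τ.2 = m - 3) {p : ℕ} (hp1 : 1 ≤ p) (hp2 : p ≤ m - 2) :
    Succ l (p, m - 2 - p) (p + 1, m - 2 - p) := by
  have hsτ : ((p : ℕ), (m - 2 - p : ℕ)) ≠ τ := by
    intro heq; rw [← heq] at hτ3; simp only at hτ3; omega
  obtain ⟨j, hj⟩ := mem_ex hham (⟨by omega, by omega⟩ : Sq m (m - 2) (p, m - 2 - p))
  obtain ⟨x, hx1, hx2⟩ := succ_ex hm hham hlast hj hsτ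
  rcases hx2 with hE | hN
  · rw [moveE_eq (by omega)] at hE
    exact ⟨j, hj, by rw [hx1, hE]⟩
  · exact absurd ⟨j, hj, by rw [hx1, hN]⟩
      (no_s_north hm hham hhead hlast hτ3 p hp1 hp2)

lemma r_east_aux (hm : 5 ≤ m) (hham : IsHamPath m (m - 2) l)
    (hhead : l.head? = some (m - 2, 0)) (hlast : l.getLast? = some τ)
    (hττ : τ = (t, m - 3 - t)) (ht1 : t ≤ m - 3) :
    ∀ k q : ℕ, q + k + 1 = t → Succ l (q, m - 3 - q) (q + 1, m - 3 - q) := by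
  intro k
  induction k with
  | zero =>
    intro q hq
    -- q = t - 1 ; the square s_t = (t, m-2-t) needs a predecessor
    obtain ⟨j, y, hjy, hjs, hedge⟩ := pred_ex hm hham hhead
      (⟨by omega, by omega⟩ : Sq m (m - 2) (t, m - 2 - t))
      (by intro heq; simp only [Prod.mk.injEq] at heq; omega)
    rcases pre_of_edge hm hedge (by omega) (by omega) (by omega) with h | h
    · refine ⟨j, ?_, ?_⟩
      · rw [show ((q : ℕ), (m - 3 - q : ℕ)) = ((t - 1 : ℕ), (m - 2 - t : ℕ)) from
          pair_eq (by omega) (by omega), ← h]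
        exact hjy
      · rw [show ((q + 1 : ℕ), (m - 3 - q : ℕ)) = ((t : ℕ), (m - 2 - t : ℕ)) from
          pair_eq (by omega) (by omega)]
        exact hjs
    · exfalso
      rw [h] at hjy
      rw [show ((t : ℕ), (m - 2 - t - 1 : ℕ)) = τ from by
        rw [hττ]; exact pair_eq rfl (by omega)] at hjy
      have hjN := tau_idx hm hham hlast hjy
      have : j + 1 < l.length := (List.getElem?_eq_some_iff.mp hjs).1
      rw [hlen hm hham] at this
      omega
  | succ k ih =>
    intro q hq
    obtain ⟨j, y, hjy, hjs, hedge⟩ := pred_ex hm hham hhead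
      (⟨by omega, by omega⟩ : Sq m (m - 2) (q + 1, m - 3 - q))
      (by intro heq; simp only [Prod.mk.injEq] at heq; omega)
    rcases pre_of_edge hm hedge (by omega) (by omega) (by omega) with h | h
    · refine ⟨j, ?_, hjs⟩
      rw [show ((q : ℕ), (m - 3 - q : ℕ)) = ((q + 1 - 1 : ℕ), (m - 3 - q : ℕ)) from
        pair_eq (by omega) rfl, ← h]
      exact hjy
    · exfalso
      have hIH := ih (q + 1) (by omega)
      rw [h] at hjy
      rw [show ((q + 1 : ℕ), (m - 3 - q - 1 : ℕ)) = ((q + 1 : ℕ), (m - 3 - (q + 1) : ℕ)) from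
        pair_eq rfl (by omega)] at hjy
      have := succ_det hham.2.1 hIH hjy
      have h2 := Option.some_injective _ (this.symm.trans hjs)
      simp only [Prod.mk.injEq] at h2
      omega

lemma r_east' (hm : 5 ≤ m) (hham : IsHamPath m (m - 2) l)
    (hhead : l.head? = some (m - 2, 0)) (hlast : l.getLast? = some τ)
    (hττ : τ = (t, m - 3 - t)) (ht1 : t ≤ m - 3) {q : ℕ} (hq : q < t) :
    Succ l (q, m - 3 - q) (q + 1, m - 3 - q) :=
  r_east_aux hm hham hhead hlast hττ ht1 (t - 1 - q) q (by omega)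

lemma r_north (hm : 5 ≤ m) (hham : IsHamPath m (m - 2) l)
    (hhead : l.head? = some (m - 2, 0)) (hlast : l.getLast? = some τ)
    (hττ : τ = (t, m - 3 - t)) {q : ℕ} (hq1 : t < q) (hq2 : q ≤ m - 3) :
    Succ l (q, m - 3 - q) (q, m - 2 - q) := by
  have hne : ((q : ℕ), (m - 3 - q : ℕ)) ≠ τ := by
    rw [hττ]; intro heq; simp only [Prod.mk.injEq] at heq; omega
  have hnoE := no_r_east hm hham hhead hlast (m - 3 - q) q (by omega)
    (fun q' h1 h2 heq => by
      rw [hττ] at heq; simp only [Prod.mk.injEq] at heq; omega)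
  obtain ⟨j, hj⟩ := mem_ex hham (⟨by omega, by omega⟩ : Sq m (m - 2) (q, m - 3 - q))
  obtain ⟨x, hx1, hx2⟩ := succ_ex hm hham hlast hj hne
  rcases hx2 with hE | hN
  · exact absurd ⟨j, hj, by rw [hx1, hE]⟩ hnoE
  · rw [moveN_eq (by omega)] at hN
    refine ⟨j, hj, ?_⟩
    rw [hx1, hN]
    exact congrArg some (pair_eq rfl (by omega))

lemma stepF (hm : 5 ≤ m) (hham : IsHamPath m (m - 2) l)
    (hhead : l.head? = some (m - 2, 0)) (hlast : l.getLast? = some τ)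
    (hTN : ∀ s, Sq m (m - 2) s → ¬SameDiag m (m - 2) s τ → TravelsNorth m (m - 2) l s)
    (hττ : τ = (t, m - 3 - t)) (ht1 : t ≤ m - 3) :
    ∀ s : ℕ × ℕ, Sq m (m - 2) s → s ≠ τ → Succ l s (F m t s) := by
  rintro ⟨a, b⟩ ⟨ha, hb⟩ hneτ
  have hτ3 : τ.1 + τ.2 = m - 3 := by rw [hττ]; simp only; omega
  by_cases h2 : a + b = m - 2
  · have hab : b = m - 2 - a := by omega
    subst hab
    rw [F_E (Or.inl (by omega)) (by omega)]
    exact s_east hm hham hhead hlast hτ3 (by omega) (by omega)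
  by_cases h3 : a + b = m - 3
  · have hab : b = m - 3 - a := by omega
    subst hab
    rcases lt_trichotomy a t with hlt | heq | hgt
    · rw [F_E (Or.inr ⟨by omega, hlt⟩) (by omega)]
      exact r_east' hm hham hhead hlast hττ ht1 hlt
    · exact absurd (by rw [hττ, heq] : ((a:ℕ), (m - 3 - a : ℕ)) = τ) hneτ
    · have hF : F m t (a, m - 3 - a) = (a, m - 2 - a) := by
        unfold F
        rw [if_neg (by simp only [not_or]; omega)]
        rw [moveN_eq (by omega)]
        exact pair_eq rfl (by omega)
      rw [hF]
      exact r_north hm hham hhead hlast hττ hgt (by omega)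
  · have hnsd : ¬ SameDiag m (m - 2) (a, b) τ := by
      simp only [SameDiag, hττ]
      push_neg
      exact ⟨by omega, by omega⟩
    obtain ⟨i, hi1, hi2⟩ := hTN (a, b) ⟨ha, hb⟩ hnsd
    rw [F_notdiag h2 h3]
    exact ⟨i, hi1, hi2⟩

lemma orbit (hm : 5 ≤ m) (hham : IsHamPath m (m - 2) l)
    (hhead : l.head? = some (m - 2, 0)) (hlast : l.getLast? = some τ)
    (hTN : ∀ s, Sq m (m - 2) s → ¬SameDiag m (m - 2) s τ → TravelsNorth m (m - 2) l s)
    (hττ : τ = (t, m - 3 - t)) (ht1 : t ≤ m - 3) :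
    ∀ i, i < m * (m - 2) → l[i]? = some ((F m t)^[i] (m - 2, 0)) := by
  intro i
  induction i with
  | zero =>
    intro _
    rw [Function.iterate_zero, id_eq]
    exact head0 hhead
  | succ i ih =>
    intro hi
    have hprev := ih (by omega)
    have hneτ : (F m t)^[i] (m - 2, 0) ≠ τ := by
      intro heq
      rw [heq] at hprev
      have := tau_idx hm hham hlast hprev
      omega
    have hstep := stepF hm hham hhead hlast hTN hττ ht1 _ (orbit_Sq hm i) hneτ
    have := succ_det hham.2.1 hstep hprev
    rwa [Function.iterate_succ_apply']

end NecForce2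

lemma necessity {m : ℕ} {τ : ℕ × ℕ} {l : List (ℕ × ℕ)} (hm : 5 ≤ m)
    (hham : IsHamPath m (m - 2) l) (hhead : l.head? = some (m - 2, 0))
    (hlast : l.getLast? = some τ)
    (hTN : ∀ s, Sq m (m - 2) s → ¬SameDiag m (m - 2) s τ → TravelsNorth m (m - 2) l s) :
    τ = (m / 2 - 1, (m - 1) / 2 - 1) := by
  have hτ3 := tau_sum3 hm hham hhead hlast hTN
  obtain ⟨t, b⟩ := τ
  simp only at hτ3
  have ht1 : t ≤ m - 3 := by omega
  have hb : b = m - 3 - t := by omega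
  subst hb
  have horb := orbit hm hham hhead hlast hTN rfl ht1
  by_cases hc1 : 2 * t + 4 ≤ m
  · exfalso
    have hval : (F m t)^[(m - 3 - t) + ((2 * m - 1) * t + (m - 1))] (m - 2, 0)
        = (t, m - 3 - t) :=
      iter2 _ (botA hm ht1 (le_refl _) (by omega))
        (climbH (le_refl _) (by omega) (by omega)) rfl
    have hbnd : (m - 3 - t) + ((2 * m - 1) * t + (m - 1)) + 1 < m * (m - 2) := by
      have e1 : (3 : ℕ) ≤ m := by omega
      have e2 : t ≤ m - 3 := ht1
      have e3 : (1 : ℕ) ≤ 2 * m := by omega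
      have e4 : (1 : ℕ) ≤ m := by omega
      have e5 : (2 : ℕ) ≤ m := by omega
      zify [e1, e2, e3, e4, e5]
      nlinarith [mul_nonneg (show (0:ℤ) ≤ (m:ℤ) - 1 by push_cast; linarith)
        (show (0:ℤ) ≤ (m:ℤ) - 4 - 2*t by push_cast; omega)]
    have hidx := horb ((m - 3 - t) + ((2 * m - 1) * t + (m - 1))) (by omega)
    rw [hval] at hidx
    have := tau_idx hm hham hlast hidx
    omega
  by_cases hc2 : m ≤ 2 * t + 1
  · exfalso
    have hval : (F m t)^[(m - 3 - t) + ((2 * m - 1) * (m - 2 - t))] (m - 2, 0)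
        = (t, m - 3 - t) :=
      iter2 _ (botB hm ht1 (le_refl _) (by omega) (by omega))
        (climbH (le_refl _) (by omega) (by omega)) rfl
    have hbnd : (m - 3 - t) + ((2 * m - 1) * (m - 2 - t)) + 1 < m * (m - 2) := by
      have e1 : (3 : ℕ) ≤ m := by omega
      have e2 : t ≤ m - 3 := ht1
      have e3 : (1 : ℕ) ≤ 2 * m := by omega
      have e5 : (2 : ℕ) ≤ m := by omega
      have e6 : t ≤ m - 2 := by omega
      zify [e1, e2, e3, e5, e6]
      nlinarith [mul_nonneg (show (0:ℤ) ≤ (m:ℤ) by positivity)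
        (show (0:ℤ) ≤ 2*(t:ℤ) + 1 - m by push_cast; omega)]
    have hidx := horb ((m - 3 - t) + ((2 * m - 1) * (m - 2 - t))) (by omega)
    rw [hval] at hidx
    have := tau_idx hm hham hlast hidx
    omega
  · exact pair_eq (by omega) (by omega)

theorem initTauPlus (m : ℕ) (hm : 5 ≤ m) (τ : ℕ × ℕ) (hτ : Sq m (m - 2) τ) :
    (∃ l, HamPathFromTo m (m - 2) (m - 2, 0) τ l ∧
        ∀ s, Sq m (m - 2) s → ¬ SameDiag m (m - 2) s τ → TravelsNorth m (m - 2) l s) ↔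
    τ = (m / 2 - 1, (m - 1) / 2 - 1) := by
  constructor
  · rintro ⟨l, ⟨hham, hhead, hlast⟩, hTN⟩
    exact necessity hm hham hhead hlast hTN
  · rintro rfl
    have hpar : 2 * (m / 2 - 1) + 2 = m ∨ 2 * (m / 2 - 1) + 3 = m := by omega
    have heq : ((m / 2 - 1 : ℕ), ((m - 1) / 2 - 1 : ℕ))
        = ((m / 2 - 1 : ℕ), (m - 3 - (m / 2 - 1) : ℕ)) := pair_eq rfl (by omega)
    rw [heq]
    obtain ⟨h1, h2⟩ := sufficiency hm hpar
    exact ⟨LL m (m / 2 - 1), h1, h2⟩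


end ProjBoard
end

section
/- Let m ≥ n ≥ 1 and let H be a hamiltonian path in the m×n projective checkerboard B(m,n). If D is an inner diagonal (relative to the terminal diagonal of H) that travels east in H, then either D is rowful, or every inner diagonal travels east in H. -/
namespace ProjBoard

/-! ### Auxiliary machinery -/

lemma moveE_lo (m n p q : ℕ) (h : p < m - 1) : moveE m n (p, q) = (p + 1, q) := by
  simp [moveE, h]

lemma moveE_hi (m n p q : ℕ) (h : ¬ p < m - 1) : moveE m n (p, q) = (0, n - 1 - q) := by
  simp [moveE, h]

lemma moveN_lo (m n p q : ℕ) (h : q < n - 1) : moveN m n (p, q) = (p, q + 1) := by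
  simp [moveN, h]

lemma moveN_hi (m n p q : ℕ) (h : ¬ q < n - 1) : moveN m n (p, q) = (m - 1 - p, 0) := by
  simp [moveN, h]

/-- All squares of the diagonal with subdiagonal-sum `σ` travel east. -/
def AllE (m n : ℕ) (l : List (ℕ × ℕ)) (σ : ℕ) : Prop :=
  ∀ t : ℕ × ℕ, Sq m n t → (t.1 + t.2 = σ ∨ t.1 + t.2 + σ = m + n - 3) →
    TravelsEast m n l t

lemma pos_unique {l : List (ℕ × ℕ)} (hnd : l.Nodup) {i j : ℕ} {x : ℕ × ℕ}
    (hi : l[i]? = some x) (hj : l[j]? = some x) : i = j := by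
  have hii : i < l.length := by
    rcases List.getElem?_eq_some_iff.mp hi with ⟨h, _⟩
    exact h
  exact (List.getElem?_inj hii hnd).mp (hi.trans hj.symm)

lemma succ_or {m n : ℕ} {l : List (ℕ × ℕ)} {τ : ℕ × ℕ}
    (hl : IsHamPath m n l) (hτ : l.getLast? = some τ)
    {t : ℕ × ℕ} (ht : Sq m n t) (hne : t ≠ τ) :
    TravelsEast m n l t ∨ TravelsNorth m n l t := by
  obtain ⟨hch, hnd, hcov⟩ := hl
  have hmem : t ∈ l := (hcov t).mp ht
  obtain ⟨k, hk, hkv⟩ := List.mem_iff_getElem.mp hmem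
  by_cases hk1 : k + 1 < l.length
  · have he : Edge m n l[k] l[k + 1] := List.isChain_iff_getElem.mp hch k (by omega)
    rcases he.2 with h | h
    · left
      exact ⟨k, by rw [List.getElem?_eq_getElem hk, hkv],
        by rw [List.getElem?_eq_getElem hk1, h, hkv]⟩
    · right
      exact ⟨k, by rw [List.getElem?_eq_getElem hk, hkv],
        by rw [List.getElem?_eq_getElem hk1, h, hkv]⟩
  · exfalso
    apply hne
    have hlen : k = l.length - 1 := by omega
    have hlast : l.getLast? = some t := by
      rw [List.getLast?_eq_getElem?, ← hlen, List.getElem?_eq_getElem hk, hkv]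
    rw [hlast] at hτ
    exact Option.some_inj.mp hτ

/-- In-degree forcing: if `s` travels east and the north move of `y` coincides with
the east move of `s`, then `y` cannot travel north, hence travels east. -/
lemma force_east {m n : ℕ} {l : List (ℕ × ℕ)} {τ : ℕ × ℕ}
    (hl : IsHamPath m n l) (hτ : l.getLast? = some τ)
    {s y : ℕ × ℕ} (hse : TravelsEast m n l s) (hy : Sq m n y)
    (hys : y ≠ s) (hyτ : y ≠ τ) (hEN : moveN m n y = moveE m n s) :
    TravelsEast m n l y := by
  rcases succ_or hl hτ hy hyτ with h | h
  · exact h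
  · exfalso
    obtain ⟨k, hk, hk1⟩ := h
    obtain ⟨k', hk', hk1'⟩ := hse
    rw [hEN] at hk1
    have hkk : k + 1 = k' + 1 := pos_unique hl.2.1 hk1 hk1'
    have hkk' : k = k' := by omega
    subst hkk'
    rw [hk] at hk'
    exact hys (by injection hk')

/-- Descend a subdiagonal: if `(x,y)` travels east, so does every square of the same
subdiagonal farther south-east. -/
lemma desc {m n : ℕ} {l : List (ℕ × ℕ)} {τ : ℕ × ℕ}
    (hl : IsHamPath m n l) (hτ : l.getLast? = some τ)
    {x y : ℕ} (hE : TravelsEast m n l (x, y)) (hyn : y < n)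
    (hτne : τ.1 + τ.2 ≠ x + y) :
    ∀ x', x ≤ x' → ∀ y', x' + y' = x + y → x' < m → TravelsEast m n l (x', y') := by
  intro x' hx
  induction x', hx using Nat.le_induction with
  | base =>
    intro y' h1 _
    have hyy : y' = y := by omega
    subst hyy
    exact hE
  | succ x' hx ih =>
    intro y'' hsum hxm
    have hstep : TravelsEast m n l (x', y'' + 1) := ih (y'' + 1) (by omega) (by omega)
    apply force_east hl hτ hstep
    · exact ⟨show x' + 1 < m by omega, show y'' < n by omega⟩
    · intro h
      have h1 : x' + 1 = x' := congrArg Prod.fst h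
      omega
    · intro h
      apply hτne
      rw [← h]
      show x' + 1 + y'' = x + y
      omega
    · rw [moveN_lo m n _ _ (by omega : y'' < n - 1),
        moveE_lo m n _ _ (by omega : x' < m - 1)]

/-- Jump from the bottom of a subdiagonal to the top of the paired subdiagonal. -/
lemma jumpA {m n : ℕ} {l : List (ℕ × ℕ)} {τ : ℕ × ℕ}
    (hl : IsHamPath m n l) (hτ : l.getLast? = some τ)
    {σ₀ : ℕ} (hE : TravelsEast m n l (σ₀, 0))
    (hσm : σ₀ ≤ m - 2) (hm2 : 2 ≤ m) (hn2 : 2 ≤ n)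
    (hτne : τ.1 + τ.2 + σ₀ ≠ m + n - 3) :
    TravelsEast m n l (m - 2 - σ₀, n - 1) := by
  apply force_east hl hτ hE
  · exact ⟨show m - 2 - σ₀ < m by omega, show n - 1 < n by omega⟩
  · intro h
    have h1 : (n : ℕ) - 1 = 0 := congrArg Prod.snd h
    omega
  · intro h
    apply hτne
    rw [← h]
    show m - 2 - σ₀ + (n - 1) + σ₀ = m + n - 3
    omega
  · rw [moveN_hi m n _ _ (by omega : ¬ n - 1 < n - 1),
      moveE_lo m n _ _ (by omega : σ₀ < m - 1),
      show m - 1 - (m - 2 - σ₀) = σ₀ + 1 from by omega]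

/-- Jump from the north-east corner square of a high subdiagonal back to the top of
the paired low subdiagonal. -/
lemma jumpB {m n : ℕ} {l : List (ℕ × ℕ)} {τ : ℕ × ℕ}
    (hl : IsHamPath m n l) (hτ : l.getLast? = some τ)
    {q : ℕ} (hE : TravelsEast m n l (m - 1, q))
    (hq : q ≤ n - 2) (hm2 : 2 ≤ m) (hn2 : 2 ≤ n)
    (hτne : τ.1 + τ.2 ≠ n - 2 - q) :
    TravelsEast m n l (0, n - 2 - q) := by
  apply force_east hl hτ hE
  · exact ⟨show 0 < m by omega, show n - 2 - q < n by omega⟩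
  · intro h
    have h1 : (0 : ℕ) = m - 1 := congrArg Prod.fst h
    omega
  · intro h
    apply hτne
    rw [← h]
    show (0 : ℕ) + (n - 2 - q) = n - 2 - q
    omega
  · rw [moveN_lo m n _ _ (by omega : n - 2 - q < n - 1),
      moveE_hi m n _ _ (by omega : ¬ m - 1 < m - 1),
      show n - 2 - q + 1 = n - 1 - q from by omega]

/-- Dichotomy: a non-terminal diagonal which does not travel east travels north. -/
lemma dicho {m n a b : ℕ} {l : List (ℕ × ℕ)} {τ : ℕ × ℕ}
    (hl : IsHamPath m n l) (hτ : l.getLast? = some τ)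
    (hterm : τ.1 + τ.2 = a ∨ τ.1 + τ.2 = b) (habsum : a + b = m + n - 3)
    (hnm : n ≤ m) (hn3 : 3 ≤ n)
    {σ : ℕ} (hσ1 : a + 1 ≤ σ) (hσ2 : σ + a + 1 ≤ m + n - 3)
    (hne : ¬ AllE m n l σ) :
    ∀ t : ℕ × ℕ, Sq m n t → (t.1 + t.2 = σ ∨ t.1 + t.2 + σ = m + n - 3) →
      TravelsNorth m n l t := by
  obtain ⟨ℓ, hA, hB, hℓ1⟩ : ∃ ℓ, (ℓ = σ ∨ ℓ + σ = m + n - 3) ∧ 2 * ℓ ≤ m + n - 3 ∧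
      a + 1 ≤ ℓ := by
    rcases le_total σ (m + n - 3 - σ) with h | h
    · exact ⟨σ, Or.inl rfl, by omega, by omega⟩
    · exact ⟨m + n - 3 - σ, Or.inr (by omega), by omega, by omega⟩
  have hℓm : ℓ ≤ m - 2 := by omega
  have hmem : ∀ t : ℕ × ℕ, (t.1 + t.2 = σ ∨ t.1 + t.2 + σ = m + n - 3) ↔
      (t.1 + t.2 = ℓ ∨ t.1 + t.2 + ℓ = m + n - 3) := by
    intro t
    rcases hA with h | h <;> constructor <;> intro h' <;> omega
  have hτlo : τ.1 + τ.2 ≠ ℓ := by rcases hterm with h | h <;> omega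
  have hτhi : ∀ u v : ℕ, u + v + ℓ = m + n - 3 → τ.1 + τ.2 ≠ u + v := by
    intro u v huv
    rcases hterm with h | h <;> omega
  have spread : ∀ u : ℕ × ℕ, Sq m n u → (u.1 + u.2 = ℓ ∨ u.1 + u.2 + ℓ = m + n - 3) →
      TravelsEast m n l u → AllE m n l σ := by
    intro u hu hud huE
    obtain ⟨hu1, hu2⟩ := hu
    have finish_low : TravelsEast m n l (ℓ, 0) → AllE m n l σ := by
      intro h0
      have htopHi : TravelsEast m n l (m - 2 - ℓ, n - 1) :=
        jumpA hl hτ h0 (by omega) (by omega) (by omega) (by rcases hterm with h | h <;> omega)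
      have hallHi : ∀ t : ℕ × ℕ, Sq m n t → t.1 + t.2 + ℓ = m + n - 3 →
          TravelsEast m n l t := by
        intro t ht hts
        obtain ⟨ht1, ht2⟩ := ht
        exact desc hl hτ htopHi (by omega)
          (hτhi _ _ (show m - 2 - ℓ + (n - 1) + ℓ = m + n - 3 by omega))
          t.1 (by omega) t.2 (by omega) ht1
      have hallLow : ∀ t : ℕ × ℕ, Sq m n t → t.1 + t.2 = ℓ → TravelsEast m n l t := by
        rcases le_or_gt ℓ (n - 2) with hcase | hcase
        · -- non-rowful
          have h1 : TravelsEast m n l (m - 1, n - 2 - ℓ) :=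
            hallHi (m - 1, n - 2 - ℓ)
              ⟨show m - 1 < m by omega, show n - 2 - ℓ < n by omega⟩
              (show m - 1 + (n - 2 - ℓ) + ℓ = m + n - 3 by omega)
          have h2 := jumpB hl hτ h1 (by omega) (by omega) (by omega)
            (by rw [show n - 2 - (n - 2 - ℓ) = ℓ from by omega]; exact hτlo)
          have h2' : TravelsEast m n l (0, ℓ) := by
            rwa [show n - 2 - (n - 2 - ℓ) = ℓ from by omega] at h2
          intro t ht hts
          obtain ⟨ht1, ht2⟩ := ht
          exact desc hl hτ h2' (by omega) (by omega) t.1 (by omega) t.2 (by omega) ht1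
        · -- rowful
          have h1 : TravelsEast m n l (m + n - 3 - ℓ, 0) :=
            hallHi (m + n - 3 - ℓ, 0)
              ⟨show m + n - 3 - ℓ < m by omega, show 0 < n by omega⟩
              (show m + n - 3 - ℓ + 0 + ℓ = m + n - 3 by omega)
          have h2 := jumpA hl hτ h1 (by omega) (by omega) (by omega)
            (by rcases hterm with h | h <;> omega)
          have h2' : TravelsEast m n l (ℓ + 1 - n, n - 1) := by
            rwa [show m - 2 - (m + n - 3 - ℓ) = ℓ + 1 - n from by omega] at h2
          intro t ht hts
          obtain ⟨ht1, ht2⟩ := ht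
          exact desc hl hτ h2' (by omega)
            (by rw [show ℓ + 1 - n + (n - 1) = ℓ from by omega]; exact hτlo)
            t.1 (by omega) t.2 (by omega) ht1
      intro t ht htd
      rcases (hmem t).mp htd with h | h
      · exact hallLow t ht h
      · exact hallHi t ht h
    rcases hud with hu1' | hu1'
    · have h0 : TravelsEast m n l (ℓ, 0) :=
        desc hl hτ huE hu2 (by rw [hu1']; exact hτlo) ℓ (by omega) 0 (by omega) (by omega)
      exact finish_low h0
    · rcases le_or_gt ℓ (n - 2) with hcase | hcase
      · have h1 : TravelsEast m n l (m - 1, n - 2 - ℓ) :=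
          desc hl hτ huE hu2 (hτhi _ _ (by omega)) (m - 1) (by omega) (n - 2 - ℓ)
            (by omega) (by omega)
        have h2 := jumpB hl hτ h1 (by omega) (by omega) (by omega)
          (by rw [show n - 2 - (n - 2 - ℓ) = ℓ from by omega]; exact hτlo)
        have h2' : TravelsEast m n l (0, ℓ) := by
          rwa [show n - 2 - (n - 2 - ℓ) = ℓ from by omega] at h2
        have h0 : TravelsEast m n l (ℓ, 0) :=
          desc hl hτ h2' (by omega) (by omega) ℓ (by omega) 0 (by omega) (by omega)
        exact finish_low h0
      · have h1 : TravelsEast m n l (m + n - 3 - ℓ, 0) :=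
          desc hl hτ huE hu2 (hτhi _ _ (by omega)) (m + n - 3 - ℓ) (by omega) 0
            (by omega) (by omega)
        have h2 := jumpA hl hτ h1 (by omega) (by omega) (by omega)
          (by rcases hterm with h | h <;> omega)
        have h2' : TravelsEast m n l (ℓ + 1 - n, n - 1) := by
          rwa [show m - 2 - (m + n - 3 - ℓ) = ℓ + 1 - n from by omega] at h2
        have h0 : TravelsEast m n l (ℓ, 0) :=
          desc hl hτ h2' (by omega)
            (by rw [show ℓ + 1 - n + (n - 1) = ℓ from by omega]; exact hτlo)
            ℓ (by omega) 0 (by omega) (by omega)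
        exact finish_low h0
  intro t ht htd
  have htτ : t ≠ τ := by
    intro h
    subst h
    rcases hterm with h | h <;> rcases htd with h' | h' <;> omega
  rcases succ_or hl hτ ht htτ with hE | hN
  · exact absurd (spread t ht ((hmem t).mp htd) hE) hne
  · exact hN

theorem canGoEast (m n a b : ℕ) (hnm : n ≤ m) (hn : 1 ≤ n)
    (hab : a ≤ b) (habsum : a + b = m + n - 3)
    (l : List (ℕ × ℕ)) (τ : ℕ × ℕ) (hl : IsHamPath m n l) (hτ : l.getLast? = some τ)
    (hterm : τ.1 + τ.2 = a ∨ τ.1 + τ.2 = b)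
    (i j : ℕ) (hij : i ≤ j) (hijsum : i + j = m + n - 3) (hinner : a < i)
    (heast : ∀ s, Sq m n s → (s.1 + s.2 = i ∨ s.1 + s.2 = j) → TravelsEast m n l s) :
    (n - 1 ≤ i ∧ j ≤ m - 2) ∨
    (∀ i' j', i' ≤ j' → i' + j' = m + n - 3 → a < i' →
      ∀ s, Sq m n s → (s.1 + s.2 = i' ∨ s.1 + s.2 = j') → TravelsEast m n l s) := by
  classical
  by_cases hrow : n - 1 ≤ i ∧ j ≤ m - 2
  · exact Or.inl hrow
  right
  have hi2 : i ≤ n - 2 := by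
    rcases not_and_or.mp hrow with h | h <;> omega
  have hn3 : 3 ≤ n := by omega
  have hm3 : 3 ≤ m := by omega
  intro i' j' hij' hsum' hin' s hs hdgs
  by_contra hnot
  have hAEi : AllE m n l i := by
    intro t ht htd
    apply heast t ht
    rcases htd with h | h
    · exact Or.inl h
    · exact Or.inr (by omega)
  have hnAE : ¬ AllE m n l i' := by
    intro hA
    exact hnot (hA s hs (by rcases hdgs with h | h <;> omega))
  -- the greatest non-rowful east diagonal
  set P : ℕ → Prop := fun c' => a + 1 ≤ c' ∧ AllE m n l c' with hPdef
  have hPi : P i := ⟨by omega, hAEi⟩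
  set c := Nat.findGreatest P (n - 2) with hcdef
  have hcspec : P c := Nat.findGreatest_spec (by omega : i ≤ n - 2) hPi
  have hcle : c ≤ n - 2 := Nat.findGreatest_le _
  have hca : a + 1 ≤ c := hcspec.1
  have hcAE : AllE m n l c := hcspec.2
  have hcmax : ∀ σ, c < σ → σ ≤ n - 2 → ¬ AllE m n l σ := by
    intro σ h1 h2 hA
    exact Nat.findGreatest_is_greatest h1 h2 ⟨by omega, hA⟩
  -- the least bad sum ≥ n-1
  have hex : ∃ u, ¬ AllE m n l (n - 1 + u) := by
    rcases le_or_gt (n - 1) i' with h | h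
    · refine ⟨i' - (n - 1), ?_⟩
      rwa [show n - 1 + (i' - (n - 1)) = i' from by omega]
    · refine ⟨m - 2 - i', ?_⟩
      rw [show n - 1 + (m - 2 - i') = m + n - 3 - i' from by omega]
      intro hA
      apply hnAE
      intro t ht htd
      apply hA t ht
      omega
  set uN := Nat.find hex with huNdef
  have huNspec : ¬ AllE m n l (n - 1 + uN) := Nat.find_spec hex
  have huNmin : ∀ u, u < uN → AllE m n l (n - 1 + u) := by
    intro u hu
    exact not_not.mp (Nat.find_min hex hu)
  have huNb : n - 1 + uN + a + 1 ≤ m + n - 3 := by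
    rcases le_or_gt (n - 1) i' with h | h
    · have hle : uN ≤ i' - (n - 1) := by
        apply Nat.find_min' hex
        rwa [show n - 1 + (i' - (n - 1)) = i' from by omega]
      omega
    · have hle : uN ≤ m - 2 - i' := by
        apply Nat.find_min' hex
        rw [show n - 1 + (m - 2 - i') = m + n - 3 - i' from by omega]
        intro hA
        apply hnAE
        intro t ht htd
        apply hA t ht
        omega
      omega
  set d := n - 2 - c with hddef
  have hcd : c + d = n - 2 := by omega
  have hAllN : ∀ σ, c + 1 ≤ σ → σ ≤ n - 2 →
      ∀ t : ℕ × ℕ, Sq m n t → (t.1 + t.2 = σ ∨ t.1 + t.2 + σ = m + n - 3) →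
        TravelsNorth m n l t := by
    intro σ h1 h2
    exact dicho hl hτ hterm habsum hnm hn3 (by omega) (by omega) (hcmax σ (by omega) h2)
  have hNσN : ∀ t : ℕ × ℕ, Sq m n t →
      (t.1 + t.2 = n - 1 + uN ∨ t.1 + t.2 + (n - 1 + uN) = m + n - 3) →
        TravelsNorth m n l t :=
    dicho hl hτ hterm habsum hnm hn3 (by omega) (by omega) huNspec
  have hnd := hl.2.1
  -- base edge: (m-1, d) travels east into (0, c+1)
  have hF1 : ∃ Qi, l[Qi]? = some (m - 1, d) ∧ l[Qi + 1]? = some (0, c + 1) := by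
    have h := hcAE (m - 1, d) ⟨show m - 1 < m by omega, show d < n by omega⟩
      (Or.inr (show m - 1 + d + c = m + n - 3 by omega))
    obtain ⟨k, hk, hk1⟩ := h
    refine ⟨k, hk, ?_⟩
    rwa [moveE_hi m n _ _ (by omega : ¬ m - 1 < m - 1),
      show n - 1 - d = c + 1 from by omega] at hk1
  obtain ⟨Qi, hQiV, hQi1⟩ := hF1
  -- backward climb: positions of (m-1, d-s)
  have climbB : ∀ s : ℕ, s ≤ d → ∃ R, R + s = Qi ∧ l[R]? = some (m - 1, d - s) := by
    intro s
    induction s with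
    | zero =>
      intro _
      exact ⟨Qi, by omega, by rw [Nat.sub_zero]; exact hQiV⟩
    | succ s ih =>
      intro hs
      obtain ⟨R, hR, hRv⟩ := ih (by omega)
      have hN : TravelsNorth m n l (m - 1, d - (s + 1)) := by
        apply hAllN (c + 1 + s) (by omega) (by omega)
        · exact ⟨show m - 1 < m by omega, show d - (s + 1) < n by omega⟩
        · exact Or.inr (show m - 1 + (d - (s + 1)) + (c + 1 + s) = m + n - 3 by
            clear * - hs hcd hn3 hnm; omega)
      obtain ⟨idx, hidx, hidx1⟩ := hN
      rw [moveN_lo m n _ _ (by omega : d - (s + 1) < n - 1),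
        show d - (s + 1) + 1 = d - s from by omega] at hidx1
      have heq : idx + 1 = R := pos_unique hnd hidx1 hRv
      exact ⟨idx, by omega, hidx⟩
  obtain ⟨R1, hR1, hR1V⟩ := climbB d le_rfl
  rw [show d - d = 0 from by omega] at hR1V
  -- backward march: positions of (m-1-t, 0)
  have marchB : ∀ t : ℕ, t ≤ uN → ∃ R, R + t = R1 ∧ l[R]? = some (m - 1 - t, 0) := by
    intro t
    induction t with
    | zero =>
      intro _
      exact ⟨R1, by omega, by rw [Nat.sub_zero]; exact hR1V⟩
    | succ t ih =>
      intro ht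
      obtain ⟨R, hR, hRv⟩ := ih (by omega)
      have hE : TravelsEast m n l (m - 2 - t, 0) := by
        apply huNmin t (by omega)
        · exact ⟨show m - 2 - t < m by omega, show 0 < n by omega⟩
        · exact Or.inr (show m - 2 - t + 0 + (n - 1 + t) = m + n - 3 by
            clear * - ht huNb hn3 hm3 hnm; omega)
      obtain ⟨idx, hidx, hidx1⟩ := hE
      rw [moveE_lo m n _ _ (by clear * - hm3; omega : m - 2 - t < m - 1),
        show m - 2 - t + 1 = m - 1 - t from by clear * - ht huNb hn3 hm3 hnm; omega] at hidx1
      have heq : idx + 1 = R := pos_unique hnd hidx1 hRv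
      refine ⟨idx, by omega, ?_⟩
      rwa [show m - 2 - t = m - 1 - (t + 1) from by clear * - hm3; omega] at hidx
  obtain ⟨Pp, hPp, hPpV⟩ := marchB uN le_rfl
  -- forward climb: positions of (0, c+1+s)
  have climbF : ∀ s : ℕ, s ≤ d → l[Qi + 1 + s]? = some (0, c + 1 + s) := by
    intro s
    induction s with
    | zero =>
      intro _
      simpa using hQi1
    | succ s ih =>
      intro hs
      have hprev := ih (by omega)
      have hN : TravelsNorth m n l (0, c + 1 + s) := by
        apply hAllN (c + 1 + s) (by omega) (by omega)
        · exact ⟨show 0 < m by omega, show c + 1 + s < n by omega⟩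
        · exact Or.inl (show 0 + (c + 1 + s) = c + 1 + s by omega)
      obtain ⟨idx, hidx, hidx1⟩ := hN
      rw [moveN_lo m n _ _ (by omega : c + 1 + s < n - 1)] at hidx1
      have heq : idx = Qi + 1 + s := pos_unique hnd hidx hprev
      subst heq
      rwa [show Qi + 1 + s + 1 = Qi + 1 + (s + 1) from by omega,
        show c + 1 + s + 1 = c + 1 + (s + 1) from by omega] at hidx1
  have hClimbTop : l[Qi + 1 + d]? = some (0, n - 1) := by
    have h := climbF d le_rfl
    rwa [show c + 1 + d = n - 1 from by omega] at h
  -- forward march: positions of (t, n-1)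
  have marchF : ∀ t : ℕ, t ≤ uN → l[Qi + 1 + d + t]? = some (t, n - 1) := by
    intro t
    induction t with
    | zero =>
      intro _
      simpa using hClimbTop
    | succ t ih =>
      intro ht
      have hprev := ih (by omega)
      have hE : TravelsEast m n l (t, n - 1) := by
        apply huNmin t (by omega)
        · exact ⟨show t < m by omega, show n - 1 < n by omega⟩
        · exact Or.inl (show t + (n - 1) = n - 1 + t by omega)
      obtain ⟨idx, hidx, hidx1⟩ := hE
      rw [moveE_lo m n _ _ (by omega : t < m - 1)] at hidx1
      have heq : idx = Qi + 1 + d + t := pos_unique hnd hidx hprev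
      subst heq
      rwa [show Qi + 1 + d + t + 1 = Qi + 1 + d + (t + 1) from by omega] at hidx1
  have hMarchEnd := marchF uN le_rfl
  -- final wrap edge: (uN, n-1) travels north into (m-1-uN, 0)
  have hW : TravelsNorth m n l (uN, n - 1) := by
    apply hNσN
    · exact ⟨show uN < m by omega, show n - 1 < n by omega⟩
    · exact Or.inl (show uN + (n - 1) = n - 1 + uN by omega)
  obtain ⟨idx, hidx, hidx1⟩ := hW
  rw [moveN_hi m n _ _ (by omega : ¬ n - 1 < n - 1)] at hidx1
  have heq : idx = Qi + 1 + d + uN := pos_unique hnd hidx hMarchEnd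
  subst heq
  have hfinal : Qi + 1 + d + uN + 1 = Pp := pos_unique hnd hidx1 hPpV
  omega

end ProjBoard
end
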